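/- Let 𝓗 be a hypergraph on a finite vertex set V, and let X, Y ⊆ V be disjoint with X nonempty. There exists a minimal transversal H of 𝓗 with X ⊆ H ⊆ V ∖ Y if and only if there exists a choice of edges (E_x)_{x∈X} with E_x ∈ 𝓗 and E_x ∩ X = {x} for every x ∈ X, such that for every edge T ∈ 𝓗 with T ∩ X = ∅ one has T ∖ Y ⊄ ⋃_{x∈X}(E_x ∖ Y). -/

import Mathlib

/-- For disjoint `X, Y ⊆ V` with `X` nonempty, there is a minimal transversal
`H` of `𝓗` with `X ⊆ H ⊆ V \ Y` iff there is a choice of edges `(E_x)_{x∈X}`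
with `E_x ∈ 𝓗` and `E_x ∩ X = {x}` such that for every edge `T ∈ 𝓗` with
`T ∩ X = ∅` one has `T \ Y ⊄ ⋃_{x∈X} (E_x \ Y)`. -/
theorem extension_avoiding_iff_witness_selection {α : Type*} [DecidableEq α]
    (V : Finset α) (𝓗 : Finset (Finset α)) (hEV : ∀ E ∈ 𝓗, E ⊆ V)
    (X Y : Finset α) (hXV : X ⊆ V) (hYV : Y ⊆ V)
    (hdisj : Disjoint X Y) (hXne : X.Nonempty) :
    (∃ H : Finset α, X ⊆ H ∧ H ⊆ V \ Y ∧ (∀ E ∈ 𝓗, (E ∩ H).Nonempty) ∧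
        ∀ H' ⊂ H, ¬ (∀ E ∈ 𝓗, (E ∩ H').Nonempty)) ↔
      (∃ E : α → Finset α,
        (∀ x ∈ X, E x ∈ 𝓗 ∧ E x ∩ X = {x}) ∧
        ∀ T ∈ 𝓗, T ∩ X = ∅ → ¬ T \ Y ⊆ X.biUnion (fun x => E x \ Y)) := by
  classical
  constructor
  · rintro ⟨H, hXH, hHVY, htrans, hmin⟩
    have key : ∀ x : α, ∃ Ex : Finset α,
        x ∈ X → Ex ∈ 𝓗 ∧ Ex ∩ X = {x} ∧ Ex ∩ H = {x} := by
      intro x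
      by_cases hx : x ∈ X
      · have hxH : x ∈ H := hXH hx
        have hsub : H.erase x ⊂ H := Finset.erase_ssubset hxH
        have h1 := hmin _ hsub
        push_neg at h1
        obtain ⟨Ex, hExmem, hExempty⟩ := h1
        have hEH : Ex ∩ H = {x} := by
          apply Finset.eq_singleton_iff_nonempty_unique_mem.mpr
          refine ⟨htrans Ex hExmem, ?_⟩
          intro t ht
          by_contra hne
          have : t ∈ Ex ∩ H.erase x := by
            simp only [Finset.mem_inter, Finset.mem_erase] at *
            exact ⟨ht.1, hne, ht.2⟩
          simp [hExempty] at this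
        have hxEx : x ∈ Ex := by
          have : x ∈ Ex ∩ H := by rw [hEH]; exact Finset.mem_singleton_self x
          exact (Finset.mem_inter.mp this).1
        refine ⟨Ex, fun _ => ⟨hExmem, ?_, hEH⟩⟩
        apply Finset.eq_singleton_iff_unique_mem.mpr
        refine ⟨Finset.mem_inter.mpr ⟨hxEx, hx⟩, ?_⟩
        intro t ht
        rw [Finset.mem_inter] at ht
        have : t ∈ Ex ∩ H := Finset.mem_inter.mpr ⟨ht.1, hXH ht.2⟩
        rw [hEH] at this
        exact Finset.mem_singleton.mp this
      · exact ⟨∅, fun h => absurd h hx⟩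
    choose E hE using key
    refine ⟨E, fun x hx => ⟨(hE x hx).1, (hE x hx).2.1⟩, ?_⟩
    intro T hT hTX hsub
    obtain ⟨t, ht⟩ := htrans T hT
    rw [Finset.mem_inter] at ht
    have htY : t ∉ Y := by
      have := hHVY ht.2
      exact (Finset.mem_sdiff.mp this).2
    have htX : t ∉ X := by
      intro h
      have : t ∈ T ∩ X := Finset.mem_inter.mpr ⟨ht.1, h⟩
      simp [hTX] at this
    have : t ∈ X.biUnion (fun x => E x \ Y) := hsub (Finset.mem_sdiff.mpr ⟨ht.1, htY⟩)
    rw [Finset.mem_biUnion] at this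
    obtain ⟨x, hx, htEx⟩ := this
    have : t ∈ E x ∩ H :=
      Finset.mem_inter.mpr ⟨(Finset.mem_sdiff.mp htEx).1, ht.2⟩
    rw [(hE x hx).2.2] at this
    exact htX (Finset.mem_singleton.mp this ▸ hx)
  · rintro ⟨E, hE, hcond⟩
    set U := X.biUnion (fun x => E x) with hU
    set H0 := X ∪ ((V \ Y) \ U) with hH0def
    have hXVY : X ⊆ V \ Y := fun x hx =>
      Finset.mem_sdiff.mpr ⟨hXV hx, Finset.disjoint_left.mp hdisj hx⟩
    have hH0VY : H0 ⊆ V \ Y := by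
      intro t ht
      rw [hH0def, Finset.mem_union] at ht
      rcases ht with h | h
      · exact hXVY h
      · exact (Finset.mem_sdiff.mp h).1
    have hH0x : ∀ x ∈ X, E x ∩ H0 = {x} := by
      intro x hx
      apply Finset.eq_singleton_iff_unique_mem.mpr
      constructor
      · have hxEx : x ∈ E x := by
          have : x ∈ E x ∩ X := by
            rw [(hE x hx).2]; exact Finset.mem_singleton_self x
          exact (Finset.mem_inter.mp this).1
        exact Finset.mem_inter.mpr ⟨hxEx, Finset.mem_union_left _ hx⟩
      · intro t ht
        rw [Finset.mem_inter, hH0def, Finset.mem_union] at ht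
        rcases ht.2 with h | h
        · have : t ∈ E x ∩ X := Finset.mem_inter.mpr ⟨ht.1, h⟩
          rw [(hE x hx).2] at this
          exact Finset.mem_singleton.mp this
        · exfalso
          have htU : t ∈ U := by
            rw [hU, Finset.mem_biUnion]; exact ⟨x, hx, ht.1⟩
          exact (Finset.mem_sdiff.mp h).2 htU
    have htrans0 : ∀ T ∈ 𝓗, (T ∩ H0).Nonempty := by
      intro T hT
      rcases (T ∩ X).eq_empty_or_nonempty with hTX | ⟨t, ht⟩
      · have := hcond T hT hTX
        rw [Finset.not_subset] at this
        obtain ⟨t, htTY, htB⟩ := this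
        rw [Finset.mem_sdiff] at htTY
        refine ⟨t, Finset.mem_inter.mpr ⟨htTY.1, ?_⟩⟩
        rw [hH0def, Finset.mem_union]
        right
        rw [Finset.mem_sdiff]
        refine ⟨Finset.mem_sdiff.mpr ⟨hEV T hT htTY.1, htTY.2⟩, ?_⟩
        intro htU
        rw [hU, Finset.mem_biUnion] at htU
        obtain ⟨x, hx, htEx⟩ := htU
        exact htB (Finset.mem_biUnion.mpr ⟨x, hx, Finset.mem_sdiff.mpr ⟨htEx, htTY.2⟩⟩)
      · rw [Finset.mem_inter] at ht
        exact ⟨t, Finset.mem_inter.mpr ⟨ht.1, Finset.mem_union_left _ ht.2⟩⟩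
    obtain ⟨H, hHmem, hHmin⟩ := Finset.exists_min_image
      (H0.powerset.filter (fun s => ∀ Eg ∈ 𝓗, (Eg ∩ s).Nonempty)) Finset.card
      ⟨H0, by simp only [Finset.mem_filter, Finset.mem_powerset]
              exact ⟨Finset.Subset.refl _, htrans0⟩⟩
    rw [Finset.mem_filter, Finset.mem_powerset] at hHmem
    obtain ⟨hHH0, hHtrans⟩ := hHmem
    have hXH : X ⊆ H := by
      intro x hx
      obtain ⟨t, ht⟩ := hHtrans (E x) (hE x hx).1
      have : t ∈ E x ∩ H0 := Finset.mem_inter.mpr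
        ⟨(Finset.mem_inter.mp ht).1, hHH0 (Finset.mem_inter.mp ht).2⟩
      rw [hH0x x hx] at this
      rw [Finset.mem_singleton.mp this] at ht
      exact (Finset.mem_inter.mp ht).2
    refine ⟨H, hXH, fun t ht => hH0VY (hHH0 ht), hHtrans, ?_⟩
    intro H' hH' hH'trans
    have hmem' : H' ∈ H0.powerset.filter (fun s => ∀ Eg ∈ 𝓗, (Eg ∩ s).Nonempty) := by
      rw [Finset.mem_filter, Finset.mem_powerset]
      exact ⟨hH'.subset.trans hHH0, hH'trans⟩
    have := hHmin H' hmem'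
    have hlt := Finset.card_lt_card hH'
    omega
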